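/- Let δ ∈ (0,1), let H be an n-vertex graph, let C be a set of colours with |C| ≥ 7δn, and for every vertex w of H let C_w ⊆ C, such that: (i) for every vertex w, d_H(w) ≤ |C| − |C_w|; (ii) there is a set U ⊆ V(H) with |U| ≤ δn such that every edge of H is incident to a vertex of U; (iii) for every vertex w, |C_w| ≤ δn; and (iv) for every c ∈ C, the number of vertices w with c ∈ C_w is at most δn. Then there exists a proper edge-colouring φ : E(H) → C such that every edge uv of H satisfies φ(uv) ∉ C_u ∪ C_v. -/

import Mathlib

open Finset

set_option maxHeartbeats 1000000

noncomputable def extendCol {n : ℕ} (u : Fin n) (T : Finset (Fin n)) (g : Fin n → ℕ)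
    (φ : Sym2 (Fin n) → ℕ) : Sym2 (Fin n) → ℕ :=
  fun e => if h : u ∈ e then (if Sym2.Mem.other' h ∈ T then g (Sym2.Mem.other' h) else φ e)
    else φ e

theorem extendCol_not_mem {n : ℕ} (u : Fin n) (T : Finset (Fin n)) (g : Fin n → ℕ)
    (φ : Sym2 (Fin n) → ℕ) (e : Sym2 (Fin n)) (h : u ∉ e) :
    extendCol u T g φ e = φ e := by
  simp [extendCol, dif_neg h]

theorem extendCol_mk {n : ℕ} (u : Fin n) (T : Finset (Fin n)) (g : Fin n → ℕ)
    (φ : Sym2 (Fin n) → ℕ) (v : Fin n) :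
    extendCol u T g φ s(u, v) = if v ∈ T then g v else φ s(u, v) := by
  have h : u ∈ s(u, v) := Sym2.mem_mk_left u v
  have ho : Sym2.Mem.other' h = v := Sym2.congr_right.mp (Sym2.other_spec' h)
  simp only [extendCol, dif_pos h, ho]

def GoodCol {n : ℕ} (H : SimpleGraph (Fin n)) (C : Finset ℕ) (Cw : Fin n → Finset ℕ)
    (D : Finset (Fin n)) (φ : Sym2 (Fin n) → ℕ) : Prop :=
  (∀ a b, H.Adj a b → (a ∈ D ∨ b ∈ D) → φ s(a, b) ∈ C \ (Cw a ∪ Cw b)) ∧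
  (∀ a b c, H.Adj a b → H.Adj a c → b ≠ c → (a ∈ D ∨ b ∈ D) → (a ∈ D ∨ c ∈ D) →
    φ s(a, b) ≠ φ s(a, c))

theorem step_col
    (δ : ℝ) (hδ0 : 0 < δ)
    (n : ℕ) (H : SimpleGraph (Fin n)) [DecidableRel H.Adj]
    (C : Finset ℕ) (Cw : Fin n → Finset ℕ)
    (hCsub : ∀ w, Cw w ⊆ C)
    (hC : 7 * δ * n ≤ (C.card : ℝ))
    (hdeg : ∀ w, H.degree w ≤ C.card - (Cw w).card)
    (hlist : ∀ w, ((Cw w).card : ℝ) ≤ δ * n)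
    (hfreq : ∀ c ∈ C, ((Finset.univ.filter fun w => c ∈ Cw w).card : ℝ) ≤ δ * n)
    (U : Finset (Fin n)) (hU : (U.card : ℝ) ≤ δ * n)
    (D : Finset (Fin n)) (hDU : D ⊆ U)
    (u : Fin n) (huD : u ∉ D)
    (φ : Sym2 (Fin n) → ℕ) (hφ : GoodCol H C Cw D φ) :
    ∃ φ', GoodCol H C Cw (insert u D) φ' := by
  classical
  obtain ⟨hφ1, hφ2⟩ := hφ
  set T : Finset (Fin n) := H.neighborFinset u \ D with hT
  have hTmem : ∀ v, v ∈ T ↔ H.Adj u v ∧ v ∉ D := by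
    intro v; simp [hT, SimpleGraph.mem_neighborFinset]
  set usedU : Finset ℕ := (H.neighborFinset u ∩ D).image (fun d => φ s(u, d)) with husedU
  set usedAt : Fin n → Finset ℕ :=
    fun v => (H.neighborFinset v ∩ D).image (fun d => φ s(v, d)) with husedAt
  set A : Fin n → Finset ℕ :=
    fun v => (((C \ Cw u) \ Cw v) \ usedU) \ usedAt v with hA
  -- cardinality facts
  have hDcard : (D.card : ℝ) ≤ δ * n := le_trans (by exact_mod_cast card_le_card hDU) hU
  have husedUcard : usedU.card ≤ (H.neighborFinset u ∩ D).card := card_image_le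
  have hND : (H.neighborFinset u ∩ D).card ≤ D.card := card_le_card inter_subset_right
  have husedAtcard : ∀ v, (usedAt v).card ≤ D.card := fun v =>
    le_trans card_image_le (card_le_card inter_subset_right)
  have hAcard : ∀ v, C.card ≤ (A v).card + (Cw u).card + (Cw v).card
      + usedU.card + (usedAt v).card := by
    intro v
    have h1 : C.card ≤ (C \ Cw u).card + (Cw u).card := card_le_card_sdiff_add_card
    have h2 : (C \ Cw u).card ≤ ((C \ Cw u) \ Cw v).card + (Cw v).card :=
      card_le_card_sdiff_add_card
    have h3 : ((C \ Cw u) \ Cw v).card ≤ (((C \ Cw u) \ Cw v) \ usedU).card + usedU.card :=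
      card_le_card_sdiff_add_card
    have h4 : (((C \ Cw u) \ Cw v) \ usedU).card ≤ (A v).card + (usedAt v).card :=
      card_le_card_sdiff_add_card
    omega
  -- membership in usedAt
  have hmem_usedAt : ∀ v d, H.Adj v d → d ∈ D → φ s(v, d) ∈ usedAt v := by
    intro v d hadj hd
    exact mem_image.mpr ⟨d, mem_inter.mpr ⟨(SimpleGraph.mem_neighborFinset _ _ _).mpr hadj, hd⟩,
      rfl⟩
  have hmem_usedU : ∀ d, H.Adj u d → d ∈ D → φ s(u, d) ∈ usedU := by
    intro d hadj hd
    exact mem_image.mpr ⟨d, mem_inter.mpr ⟨(SimpleGraph.mem_neighborFinset _ _ _).mpr hadj, hd⟩,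
      rfl⟩
  -- Hall condition
  have hall : ∀ S : Finset {v // v ∈ T}, S.card ≤ (S.biUnion fun v => A v.1).card := by
    intro S
    rcases S.eq_empty_or_nonempty with rfl | ⟨v₀, hv₀⟩
    · simp
    by_cases hcase : S.card ≤ (A v₀.1).card
    · refine le_trans hcase (card_le_card ?_)
      intro x hx
      exact mem_biUnion.mpr ⟨v₀, hv₀, hx⟩
    push_neg at hcase
    have hn : (0 : ℝ) < δ * n := by
      have : (0:ℕ) < n := (v₀.1 : Fin n).pos
      have : (0:ℝ) < n := by exact_mod_cast this
      positivity
    -- S.card > 3 δ n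
    have hS3 : (3:ℝ) * (δ * n) < S.card := by
      have h1 := hAcard v₀.1
      have h2 := hlist u
      have h3 := hlist v₀.1
      have h4 : (usedU.card : ℝ) ≤ δ * n :=
        le_trans (by exact_mod_cast le_trans husedUcard hND) hDcard
      have h5 : ((usedAt v₀.1).card : ℝ) ≤ δ * n :=
        le_trans (by exact_mod_cast husedAtcard v₀.1) hDcard
      have h6 : ((A v₀.1).card : ℝ) < S.card := by exact_mod_cast hcase
      have h1' : (C.card : ℝ) ≤ (A v₀.1).card + (Cw u).card + (Cw v₀.1).card
          + usedU.card + (usedAt v₀.1).card := by exact_mod_cast h1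
      nlinarith [hC]
    -- key claim
    have hB : (C \ Cw u) \ usedU ⊆ S.biUnion fun v => A v.1 := by
      intro c hc
      by_contra hcn
      have hforb : ∀ v ∈ S, c ∈ Cw v.1 ∨ c ∈ usedAt v.1 := by
        intro v hv
        have hna : c ∉ A v.1 := fun hmem => hcn (mem_biUnion.mpr ⟨v, hv, hmem⟩)
        simp only [hA, mem_sdiff] at hna
        simp only [mem_sdiff] at hc
        by_contra hcontra
        push_neg at hcontra
        exact hna ⟨⟨⟨⟨hc.1.1, hc.1.2⟩, hcontra.1⟩, hc.2⟩, hcontra.2⟩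
      have hcC : c ∈ C := (mem_sdiff.mp (mem_sdiff.mp hc).1).1
      set S₁ := S.filter (fun v => c ∈ Cw v.1) with hS₁
      set S₂ := S.filter (fun v => c ∈ usedAt v.1) with hS₂
      have hsplit : S ⊆ S₁ ∪ S₂ := by
        intro v hv
        rcases hforb v hv with h | h
        · exact mem_union_left _ (mem_filter.mpr ⟨hv, h⟩)
        · exact mem_union_right _ (mem_filter.mpr ⟨hv, h⟩)
      have hS₁card : (S₁.card : ℝ) ≤ δ * n := by
        have hinj : S₁.card ≤ (Finset.univ.filter fun w => c ∈ Cw w).card := by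
          apply Finset.card_le_card_of_injOn (fun v => v.1)
          · intro v hv
            simp only [hS₁, mem_coe, mem_filter] at hv
            exact mem_filter.mpr ⟨mem_univ _, hv.2⟩
          · exact fun a _ b _ h => Subtype.ext h
        exact le_trans (by exact_mod_cast hinj) (hfreq c hcC)
      have hS₂card : (S₂.card : ℝ) ≤ δ * n := by
        have hinj : S₂.card ≤ D.card := by
          apply Finset.card_le_card_of_injOn
            (fun v => if h : ∃ d, d ∈ D ∧ H.Adj v.1 d ∧ φ s(v.1, d) = c then h.choose else v.1)
          · intro v hv
            have hvu : c ∈ usedAt v.1 := (mem_filter.mp hv).2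
            rw [husedAt] at hvu
            simp only [mem_image, mem_inter, SimpleGraph.mem_neighborFinset] at hvu
            obtain ⟨d, ⟨hd1, hd2⟩, hd3⟩ := hvu
            have hex : ∃ d, d ∈ D ∧ H.Adj v.1 d ∧ φ s(v.1, d) = c := ⟨d, hd2, hd1, hd3⟩
            dsimp only
            rw [dif_pos hex]
            exact hex.choose_spec.1
          · intro a ha b hb hfab
            have hau : c ∈ usedAt a.1 := (mem_filter.mp ha).2
            have hbu : c ∈ usedAt b.1 := (mem_filter.mp hb).2
            rw [husedAt] at hau hbu
            simp only [mem_image, mem_inter, SimpleGraph.mem_neighborFinset] at hau hbu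
            obtain ⟨d, ⟨hd1, hd2⟩, hd3⟩ := hau
            obtain ⟨e, ⟨he1, he2⟩, he3⟩ := hbu
            have hexa : ∃ d, d ∈ D ∧ H.Adj a.1 d ∧ φ s(a.1, d) = c := ⟨d, hd2, hd1, hd3⟩
            have hexb : ∃ d, d ∈ D ∧ H.Adj b.1 d ∧ φ s(b.1, d) = c := ⟨e, he2, he1, he3⟩
            dsimp only at hfab
            rw [dif_pos hexa, dif_pos hexb] at hfab
            obtain ⟨hda, hadja, hφa⟩ := hexa.choose_spec
            obtain ⟨hdb, hadjb, hφb⟩ := hexb.choose_spec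
            rw [hfab] at hda hadja hφa
            by_contra hab
            have hne : a.1 ≠ b.1 := fun h => hab (Subtype.ext h)
            refine hφ2 hexb.choose a.1 b.1 hadja.symm hadjb.symm hne
              (Or.inl hdb) (Or.inl hdb) ?_
            rw [Sym2.eq_swap, hφa, show s(hexb.choose, b.1) = s(b.1, hexb.choose) from
              Sym2.eq_swap, hφb]
        exact le_trans (by exact_mod_cast hinj) hDcard
      have hle : (S.card : ℝ) ≤ S₁.card + S₂.card := by
        have := le_trans (card_le_card hsplit) (card_union_le S₁ S₂)
        exact_mod_cast this
      linarith
    -- finish counting in ℕ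
    have e1 : (C \ Cw u).card + (Cw u).card = C.card := card_sdiff_add_card_eq_card (hCsub u)
    have e2 : (C \ Cw u).card ≤ ((C \ Cw u) \ usedU).card + usedU.card :=
      card_le_card_sdiff_add_card
    have e3 : T.card + (H.neighborFinset u ∩ D).card = (H.neighborFinset u).card :=
      card_sdiff_add_card_inter _ _
    have e4 : H.degree u ≤ C.card - (Cw u).card := hdeg u
    have e4' : (H.neighborFinset u).card = H.degree u := rfl
    have e5 : (Cw u).card ≤ C.card := card_le_card (hCsub u)
    have e6 : S.card ≤ T.card := by
      simpa [Fintype.card_coe] using card_le_univ S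
    have e7 : ((C \ Cw u) \ usedU).card ≤ (S.biUnion fun v => A v.1).card := card_le_card hB
    omega
  -- apply Hall's theorem
  obtain ⟨f, hfinj, hfmem⟩ :=
    (Finset.all_card_le_biUnion_card_iff_exists_injective (fun v : {v // v ∈ T} => A v.1)).mp
      hall
  set g : Fin n → ℕ := fun v => if hv : v ∈ T then f ⟨v, hv⟩ else 0 with hg
  have hgA : ∀ v, v ∈ T → g v ∈ A v := by
    intro v hv; simp only [hg, dif_pos hv]; exact hfmem ⟨v, hv⟩
  have hgC : ∀ v, v ∈ T → g v ∈ C ∧ g v ∉ Cw u ∧ g v ∉ Cw v ∧ g v ∉ usedU ∧ g v ∉ usedAt v := by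
    intro v hv
    have := hgA v hv
    simp only [hA, mem_sdiff] at this
    tauto
  have hginj : ∀ v w, v ∈ T → w ∈ T → v ≠ w → g v ≠ g w := by
    intro v w hv hw hvw
    simp only [hg, dif_pos hv, dif_pos hw]
    intro h
    exact hvw (congrArg Subtype.val (hfinj h))
  set φ' := extendCol u T g φ with hφ'
  refine ⟨φ', ?_, ?_⟩
  · -- condition (1)
    intro a b hab hmem
    by_cases hau : a = u
    · obtain rfl := hau.symm
      rw [hφ', extendCol_mk]
      by_cases hbT : b ∈ T
      · rw [if_pos hbT]
        obtain ⟨h1, h2, h3, _, _⟩ := hgC b hbT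
        simp only [mem_sdiff, mem_union]
        exact ⟨h1, by tauto⟩
      · rw [if_neg hbT]
        have hbD : b ∈ D := by
          by_contra h
          exact hbT ((hTmem b).mpr ⟨hab, h⟩)
        exact hφ1 u b hab (Or.inr hbD)
    · by_cases hbu : b = u
      · obtain rfl := hbu.symm
        rw [hφ', show s(a, u) = s(u, a) from Sym2.eq_swap, extendCol_mk]
        by_cases haT : a ∈ T
        · rw [if_pos haT]
          obtain ⟨h1, h2, h3, _, _⟩ := hgC a haT
          simp only [mem_sdiff, mem_union]
          exact ⟨h1, by tauto⟩
        · rw [if_neg haT]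
          have haD : a ∈ D := by
            by_contra h
            exact haT ((hTmem a).mpr ⟨hab.symm, h⟩)
          have := hφ1 u a hab.symm (Or.inr haD)
          simp only [mem_sdiff, mem_union] at this ⊢
          tauto
      · have hue : u ∉ s(a, b) := by
          rw [Sym2.mem_iff]
          push_neg
          exact ⟨fun h => hau h.symm, fun h => hbu h.symm⟩
        rw [hφ', extendCol_not_mem _ _ _ _ _ hue]
        have hmem' : a ∈ D ∨ b ∈ D := by
          rcases hmem with h | h
          · exact Or.inl ((mem_insert.mp h).resolve_left hau)
          · exact Or.inr ((mem_insert.mp h).resolve_left hbu)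
        exact hφ1 a b hab hmem'
  · -- condition (2)
    have prop : ∀ a b c, H.Adj a b → H.Adj a c → b ≠ c → (a ∈ insert u D ∨ b ∈ insert u D) →
        (a ∈ insert u D ∨ c ∈ insert u D) → c ≠ u → φ' s(a, b) ≠ φ' s(a, c) := by
      intro a b c hab hac hbc h1 h2 hcu
      by_cases hau : a = u
      · obtain rfl := hau.symm
        rw [hφ', extendCol_mk, extendCol_mk]
        by_cases hbT : b ∈ T <;> by_cases hcT : c ∈ T
        · rw [if_pos hbT, if_pos hcT]
          exact hginj b c hbT hcT hbc
        · rw [if_pos hbT, if_neg hcT]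
          have hcD : c ∈ D := by
            by_contra h; exact hcT ((hTmem c).mpr ⟨hac, h⟩)
          have h4 := (hgC b hbT).2.2.2.1
          intro h
          exact h4 (h ▸ hmem_usedU c hac hcD)
        · rw [if_neg hbT, if_pos hcT]
          have hbD : b ∈ D := by
            by_contra h; exact hbT ((hTmem b).mpr ⟨hab, h⟩)
          have h4 := (hgC c hcT).2.2.2.1
          intro h
          exact h4 (h ▸ hmem_usedU b hab hbD)
        · rw [if_neg hbT, if_neg hcT]
          have hbD : b ∈ D := by
            by_contra h; exact hbT ((hTmem b).mpr ⟨hab, h⟩)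
          have hcD : c ∈ D := by
            by_contra h; exact hcT ((hTmem c).mpr ⟨hac, h⟩)
          exact hφ2 u b c hab hac hbc (Or.inr hbD) (Or.inr hcD)
      · by_cases hbu : b = u
        · obtain rfl := hbu.symm
          have hue : u ∉ s(a, c) := by
            rw [Sym2.mem_iff]; push_neg
            exact ⟨fun h => hau h.symm, fun h => hcu h.symm⟩
          rw [hφ', show s(a, u) = s(u, a) from Sym2.eq_swap, extendCol_mk,
            extendCol_not_mem _ _ _ _ _ hue]
          by_cases haT : a ∈ T
          · rw [if_pos haT]
            have haD : a ∉ D := ((hTmem a).mp haT).2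
            have hcD : c ∈ D := by
              rcases h2 with h | h
              · rcases mem_insert.mp h with h' | h'
                · exact absurd h' hau
                · exact absurd h' haD
              · exact (mem_insert.mp h).resolve_left hcu
            have h4 := (hgC a haT).2.2.2.2
            intro h
            exact h4 (h ▸ hmem_usedAt a c hac hcD)
          · rw [if_neg haT]
            have haD : a ∈ D := by
              by_contra h; exact haT ((hTmem a).mpr ⟨hab.symm, h⟩)
            have := hφ2 a u c hab hac hbc (Or.inl haD) (Or.inl haD)
            rwa [show s(a, u) = s(u, a) from Sym2.eq_swap] at this
        · have hue1 : u ∉ s(a, b) := by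
            rw [Sym2.mem_iff]; push_neg
            exact ⟨fun h => hau h.symm, fun h => hbu h.symm⟩
          have hue2 : u ∉ s(a, c) := by
            rw [Sym2.mem_iff]; push_neg
            exact ⟨fun h => hau h.symm, fun h => hcu h.symm⟩
          rw [hφ', extendCol_not_mem _ _ _ _ _ hue1, extendCol_not_mem _ _ _ _ _ hue2]
          have h1' : a ∈ D ∨ b ∈ D := by
            rcases h1 with h | h
            · exact Or.inl ((mem_insert.mp h).resolve_left hau)
            · exact Or.inr ((mem_insert.mp h).resolve_left hbu)
          have h2' : a ∈ D ∨ c ∈ D := by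
            rcases h2 with h | h
            · exact Or.inl ((mem_insert.mp h).resolve_left hau)
            · exact Or.inr ((mem_insert.mp h).resolve_left hcu)
          exact hφ2 a b c hab hac hbc h1' h2'
    intro a b c hab hac hbc h1 h2
    by_cases hcu : c = u
    · have hbu : b ≠ u := fun h => hbc (h.trans hcu.symm)
      exact (prop a c b hac hab (Ne.symm hbc) h2 h1 hbu).symm
    · exact prop a b c hab hac hbc h1 h2 hcu

/-- List edge-colouring of a graph dominated by a small vertex set: given a colour set `C` and
forbidden lists `Cw w ⊆ C` with the stated degree, domination and frequency conditions, there
is a proper edge-colouring of `H` with colours from `C` avoiding the forbidden lists at both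
endpoints of each edge. -/
theorem hall_based_finishing
    (δ : ℝ) (hδ0 : 0 < δ) (hδ1 : δ < 1)
    (n : ℕ) (H : SimpleGraph (Fin n)) [DecidableRel H.Adj]
    (C : Finset ℕ) (Cw : Fin n → Finset ℕ)
    (hCsub : ∀ w, Cw w ⊆ C)
    (hC : 7 * δ * n ≤ (C.card : ℝ))
    -- (i)
    (hdeg : ∀ w, H.degree w ≤ C.card - (Cw w).card)
    -- (ii)
    (hdom : ∃ U : Finset (Fin n), (U.card : ℝ) ≤ δ * n ∧
      ∀ u v, H.Adj u v → u ∈ U ∨ v ∈ U)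
    -- (iii)
    (hlist : ∀ w, ((Cw w).card : ℝ) ≤ δ * n)
    -- (iv)
    (hfreq : ∀ c ∈ C, ((Finset.univ.filter fun w => c ∈ Cw w).card : ℝ) ≤ δ * n) :
    ∃ φ : Sym2 (Fin n) → ℕ,
      (∀ u v, H.Adj u v → φ s(u, v) ∈ C) ∧
      (∀ u v w, H.Adj u v → H.Adj u w → v ≠ w → φ s(u, v) ≠ φ s(u, w)) ∧
      (∀ u v, H.Adj u v → φ s(u, v) ∉ Cw u ∪ Cw v) := by
  classical
  obtain ⟨U, hU, hdomU⟩ := hdom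
  have main : ∀ D : Finset (Fin n), D ⊆ U → ∃ φ, GoodCol H C Cw D φ := by
    intro D
    induction D using Finset.induction_on with
    | empty =>
      intro _
      refine ⟨fun _ => 0, ?_, ?_⟩
      · intro a b _ h
        rcases h with h | h <;> exact absurd h (notMem_empty _)
      · intro a b c _ _ _ h _
        rcases h with h | h <;> exact absurd h (notMem_empty _)
    | @insert u D huD ih =>
      intro hsub
      obtain ⟨hu, hDU⟩ := insert_subset_iff.mp hsub
      obtain ⟨φ, hφ⟩ := ih hDU
      exact step_col δ hδ0 n H C Cw hCsub hC hdeg hlist hfreq U hU D hDU u huD φ hφ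
  obtain ⟨φ, hφ1, hφ2⟩ := main U Subset.rfl
  refine ⟨φ, ?_, ?_, ?_⟩
  · intro a b hab
    exact (mem_sdiff.mp (hφ1 a b hab (hdomU a b hab))).1
  · intro a b c hab hac hbc
    exact hφ2 a b c hab hac hbc (hdomU a b hab) (hdomU a c hac)
  · intro a b hab
    have := (mem_sdiff.mp (hφ1 a b hab (hdomU a b hab))).2
    exact this
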